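/- Let w ∈ ℝⁿ with ∑ᵢ wᵢ = 1 and let v* be the Euclidean projection of w onto the probability simplex Δₙ. Then v* minimizes the range objective f(v) = maxᵢ(vᵢ − wᵢ) − minᵢ(vᵢ − wᵢ) over all v ∈ Δₙ, and it is the unique such minimizer. -/
import Mathlib


/-- The Euclidean projection `v` of `w` (with `∑ w = 1`) onto the probability simplex
minimizes the range objective `f(u) = max_i (u i - w i) - min_i (u i - w i)` over the
simplex, and is the unique such minimizer. -/
theorem stmt18 (n : ℕ) (w v : Fin (n + 1) → ℝ) (hw : ∑ i, w i = 1)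
    (hv0 : ∀ i, 0 ≤ v i) (hv1 : ∑ i, v i = 1)
    (hmin : ∀ u : Fin (n + 1) → ℝ, (∀ i, 0 ≤ u i) → ∑ i, u i = 1 →
      ∑ i, (v i - w i) ^ 2 ≤ ∑ i, (u i - w i) ^ 2) :
    (∀ u : Fin (n + 1) → ℝ, (∀ i, 0 ≤ u i) → ∑ i, u i = 1 →
      Finset.univ.sup' Finset.univ_nonempty (fun i => v i - w i)
          - Finset.univ.inf' Finset.univ_nonempty (fun i => v i - w i)
        ≤ Finset.univ.sup' Finset.univ_nonempty (fun i => u i - w i)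
          - Finset.univ.inf' Finset.univ_nonempty (fun i => u i - w i)) ∧
    (∀ u : Fin (n + 1) → ℝ, (∀ i, 0 ≤ u i) → ∑ i, u i = 1 →
      Finset.univ.sup' Finset.univ_nonempty (fun i => u i - w i)
          - Finset.univ.inf' Finset.univ_nonempty (fun i => u i - w i)
        = Finset.univ.sup' Finset.univ_nonempty (fun i => v i - w i)
          - Finset.univ.inf' Finset.univ_nonempty (fun i => v i - w i) → u = v) := by
  have hdsum : ∑ i, (v i - w i) = 0 := by
    rw [Finset.sum_sub_distrib, hv1, hw]; ring
  -- Key optimality condition: coordinates with positive mass have minimal v - w.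
  have key : ∀ i j, 0 < v j → v j - w j ≤ v i - w i := by
    intro i j hj
    rcases eq_or_ne i j with rfl | hij
    · exact le_rfl
    have h2 : ∀ ε : ℝ, 0 < ε → ε ≤ v j → v j - w j ≤ v i - w i + ε := by
      intro ε hε hεj
      set u : Fin (n + 1) → ℝ :=
        fun k => v k + (if k = i then ε else 0) - (if k = j then ε else 0) with hu
      have hu0 : ∀ k, 0 ≤ u k := by
        intro k
        rcases eq_or_ne k i with rfl | hki
        · simp [hu, hij]
          linarith [hv0 k, hε]
        · rcases eq_or_ne k j with rfl | hkj
          · simp [hu, hki]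
            linarith
          · simp [hu, hki, hkj]
            exact hv0 k
      have hu1 : ∑ k, u k = 1 := by
        simp [hu, Finset.sum_add_distrib, Finset.sum_sub_distrib, hv1]
      have hmain := hmin u hu0 hu1
      have hexp : ∑ k, (u k - w k) ^ 2 =
          ∑ k, ((v k - w k) ^ 2 + (if k = i then 2 * ε * (v i - w i) + ε ^ 2 else 0)
            + (if k = j then -(2 * ε * (v j - w j)) + ε ^ 2 else 0)) := by
        apply Finset.sum_congr rfl
        intro k _
        rcases eq_or_ne k i with rfl | hki
        · simp [hu, hij]
          ring
        · rcases eq_or_ne k j with rfl | hkj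
          · simp [hu, hki]
            ring
          · simp [hu, hki, hkj]
      rw [hexp] at hmain
      simp [Finset.sum_add_distrib] at hmain
      nlinarith [hmain, hε]
    by_contra hcon
    push_neg at hcon
    have hδ : 0 < min (v j) ((v j - w j - (v i - w i)) / 2) := by
      apply lt_min hj; linarith
    have := h2 _ hδ (min_le_left _ _)
    have h3 := min_le_right (v j) ((v j - w j - (v i - w i)) / 2)
    linarith
  -- a coordinate with positive mass
  obtain ⟨i0, -, hi0⟩ := Finset.exists_lt_of_sum_lt
    (show ∑ _i : Fin (n + 1), (0 : ℝ) < ∑ i, v i by simp [hv1])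
  have hminle : ∀ k, v i0 - w i0 ≤ v k - w k := fun k => key k i0 hi0
  have hT0 : v i0 - w i0 ≤ 0 := by
    have hcard := Finset.card_nsmul_le_sum Finset.univ (fun k => v k - w k)
      (v i0 - w i0) (fun k _ => hminle k)
    rw [hdsum] at hcard
    simp [nsmul_eq_mul] at hcard
    nlinarith [hcard]
  -- water-filling form
  have hcomp : ∀ k, v k - w k = max (v i0 - w i0) (-(w k)) := by
    intro k
    rcases (hv0 k).lt_or_eq with hk | hk
    · have h1 : v k - w k ≤ v i0 - w i0 := key i0 k hk
      have h2 : v k - w k = v i0 - w i0 := le_antisymm h1 (hminle k)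
      rw [h2, max_eq_left]
      linarith [hminle k]
    · rw [← hk]
      rw [max_eq_right]
      · ring
      · have := hminle k; linarith
  have infeq : Finset.univ.inf' Finset.univ_nonempty (fun i => v i - w i)
      = v i0 - w i0 :=
    le_antisymm (Finset.inf'_le _ (Finset.mem_univ i0))
      (Finset.le_inf' _ _ fun k _ => hminle k)
  -- common facts for any feasible u
  have facts : ∀ u : Fin (n + 1) → ℝ, (∀ i, 0 ≤ u i) → ∑ i, u i = 1 →
      (Finset.univ.inf' Finset.univ_nonempty (fun i => u i - w i) ≤ v i0 - w i0 ∧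
       Finset.univ.sup' Finset.univ_nonempty (fun i => v i - w i)
         ≤ Finset.univ.sup' Finset.univ_nonempty (fun i => u i - w i)) := by
    intro u hu0 hu1
    have hesum : ∑ i, (u i - w i) = 0 := by
      rw [Finset.sum_sub_distrib, hu1, hw]; ring
    have hM0 : 0 ≤ Finset.univ.sup' Finset.univ_nonempty (fun i => u i - w i) := by
      by_contra hcon
      push_neg at hcon
      have : ∑ i, (u i - w i) < ∑ _i : Fin (n + 1), (0 : ℝ) := by
        apply Finset.sum_lt_sum_of_nonempty Finset.univ_nonempty
        intro k _
        calc u k - w k ≤ _ := Finset.le_sup' (fun i => u i - w i) (Finset.mem_univ k)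
        _ < 0 := hcon
      simp [hesum] at this
    constructor
    · by_contra hcon
      push_neg at hcon
      have hlt : ∑ i, (v i - w i) < ∑ i, (u i - w i) := by
        apply Finset.sum_lt_sum
        · intro k _
          rw [hcomp k]
          apply max_le
          · exact le_trans hcon.le
              (Finset.inf'_le (fun i => u i - w i) (Finset.mem_univ k))
          · linarith [hu0 k]
        · refine ⟨i0, Finset.mem_univ i0, ?_⟩
          calc v i0 - w i0 < _ := hcon
          _ ≤ u i0 - w i0 := Finset.inf'_le (fun i => u i - w i) (Finset.mem_univ i0)
      rw [hdsum, hesum] at hlt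
      exact lt_irrefl 0 hlt
    · apply Finset.sup'_le
      intro k _
      rw [hcomp k]
      apply max_le
      · linarith
      · exact le_trans (by linarith [hu0 k])
          (Finset.le_sup' (fun i => u i - w i) (Finset.mem_univ k))
  constructor
  · intro u hu0 hu1
    obtain ⟨h1, h2⟩ := facts u hu0 hu1
    rw [infeq]
    linarith
  · intro u hu0 hu1 heq
    obtain ⟨h1, h2⟩ := facts u hu0 hu1
    rw [infeq] at heq
    have hinfeq : Finset.univ.inf' Finset.univ_nonempty (fun i => u i - w i)
        = v i0 - w i0 := by linarith
    have hle : ∀ k ∈ Finset.univ, v k - w k ≤ u k - w k := by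
      intro k _
      rw [hcomp k]
      apply max_le
      · rw [← hinfeq]
        exact Finset.inf'_le (fun i => u i - w i) (Finset.mem_univ k)
      · linarith [hu0 k]
    have hesum : ∑ i, (u i - w i) = 0 := by
      rw [Finset.sum_sub_distrib, hu1, hw]; ring
    have hsums : ∑ i, (v i - w i) = ∑ i, (u i - w i) := by rw [hdsum, hesum]
    have := (Finset.sum_eq_sum_iff_of_le hle).mp hsums
    funext k
    have hk := this k (Finset.mem_univ k)
    linarith
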